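/- For every n ≥ 0, U((r^2+r)·r^{2n}) + (r^2+r)·r^{2n} = (r^2+r)·C_n(r^2); that is, the operator U+I takes (r^2+r)·r^{2n} to (r^2+r) times the polynomial C_n evaluated at r^2. -/
import Mathlib

open Polynomial

noncomputable section

/-- `F = r(r+1)^5` in `(ZMod 2)[r]`. -/
def Fp : Polynomial (ZMod 2) := X * (X + 1) ^ 5

/-- `G = r^5(r+1)` in `(ZMod 2)[r]`. -/
def Gp : Polynomial (ZMod 2) := X ^ 5 * (X + 1)

/-- The images `v_0, …, v_5` of `1, r, …, r^5` under `U`. -/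
def v : ℕ → Polynomial (ZMod 2)
  | 0 => 1
  | 1 => X
  | 2 => X ^ 2
  | 3 => X ^ 3 + X ^ 2 + X
  | 4 => X ^ 4
  | 5 => X ^ 5 + X ^ 4 + X
  | _ => 0

/-- `U` is the unique `ZMod 2`-linear map with `U (G^k r^i) = F^k v_i` for `0 ≤ i ≤ 5`. -/
def IsU (U : Polynomial (ZMod 2) →ₗ[ZMod 2] Polynomial (ZMod 2)) : Prop :=
  ∀ k i : ℕ, i ≤ 5 → U (Gp ^ k * X ^ i) = Fp ^ k * v i

/-- The recurrence defining the polynomials `C_n` in `(ZMod 2)[t]`. -/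
def IsC (C : ℕ → Polynomial (ZMod 2)) : Prop :=
  C 0 = 0 ∧ C 1 = 1 ∧ C 2 = 1 ∧ C 3 = X ∧ C 4 = X ^ 2 ∧ C 5 = X ^ 4 + X ^ 2 + X ∧
  ∀ n : ℕ, C (n + 6) = C (n + 5) + (X ^ 6 + X ^ 5 + X ^ 2 + X) * C n + X ^ n * (X ^ 2 + X)

/-- The values of `U` on the powers of `X`. -/
def u : ℕ → Polynomial (ZMod 2)
  | 0 => 1
  | 1 => X
  | 2 => X ^ 2
  | 3 => X ^ 3 + X ^ 2 + X
  | 4 => X ^ 4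
  | 5 => X ^ 5 + X ^ 4 + X
  | (m+6) => Fp * u m + u (m+5)

lemma two_eq_zero' : (2 : Polynomial (ZMod 2)) = 0 := by
  exact_mod_cast CharP.cast_eq_zero (Polynomial (ZMod 2)) 2

lemma u_eq (m : ℕ) : u (m + 6) = Fp * u m + u (m + 5) := rfl

lemma hFp : Fp = X ^ 6 + X ^ 5 + X ^ 2 + X := by
  have h2 := two_eq_zero'
  unfold Fp
  linear_combination (2 * X ^ 5 + 5 * X ^ 4 + 5 * X ^ 3 + 2 * X ^ 2) * h2

lemma key (U : Polynomial (ZMod 2) →ₗ[ZMod 2] Polynomial (ZMod 2)) (hU : IsU U) :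
    ∀ m k, U (Gp ^ k * X ^ m) = Fp ^ k * u m := by
  have h2 := two_eq_zero'
  intro m
  induction m using Nat.strong_induction_on with
  | _ m ih =>
    match m with
    | 0 => intro k; simpa [u, v] using hU k 0 (by norm_num)
    | 1 => intro k; simpa [u, v] using hU k 1 (by norm_num)
    | 2 => intro k; simpa [u, v] using hU k 2 (by norm_num)
    | 3 => intro k; simpa [u, v] using hU k 3 (by norm_num)
    | 4 => intro k; simpa [u, v] using hU k 4 (by norm_num)
    | 5 => intro k; simpa [u, v] using hU k 5 (by norm_num)
    | (m+6) =>
      intro k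
      have hg : Gp * (X : Polynomial (ZMod 2)) ^ m = X ^ (m+6) + X ^ (m+5) := by
        simp only [Gp]; ring
      have hx : Gp ^ k * (X : Polynomial (ZMod 2)) ^ (m+6)
          = Gp ^ (k+1) * X ^ m + Gp ^ k * X ^ (m+5) := by
        calc Gp ^ k * (X : Polynomial (ZMod 2)) ^ (m+6)
            = Gp ^ k * ((X ^ (m+6) + X ^ (m+5)) + X ^ (m+5)) := by
              rw [show (X : Polynomial (ZMod 2)) ^ (m+6) + X ^ (m+5) + X ^ (m+5)
                  = X ^ (m+6) + (2 : Polynomial (ZMod 2)) * X ^ (m+5) by ring, h2]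
              ring
          _ = Gp ^ (k+1) * X ^ m + Gp ^ k * X ^ (m+5) := by rw [← hg]; ring
      rw [hx, map_add, ih m (by omega) (k+1), ih (m+5) (by omega) k]
      show _ = Fp ^ k * (Fp * u m + u (m+5))
      ring

lemma hu6 : u 6 = X ^ 6 + X ^ 4 + X ^ 2 := by
  have h2 := two_eq_zero'
  have e : u 6 = Fp * u 0 + u 5 := rfl
  have e6 : u 0 = 1 := rfl
  have e1 : u 5 = X ^ 5 + X ^ 4 + X := rfl
  rw [e, e6, e1, hFp]
  linear_combination (X ^ 5 + X) * h2

lemma hu7 : u 7 = X ^ 7 + X ^ 4 + X ^ 3 := by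
  have h2 := two_eq_zero'
  have e : u 7 = Fp * u 1 + u 6 := rfl
  have e6 : u 1 = X := rfl
  rw [e, e6, hu6, hFp]
  linear_combination (X ^ 6 + X ^ 2) * h2

lemma hu8 : u 8 = X ^ 8 := by
  have h2 := two_eq_zero'
  have e : u 8 = Fp * u 2 + u 7 := rfl
  have e6 : u 2 = X ^ 2 := rfl
  rw [e, e6, hu7, hFp]
  linear_combination (X ^ 7 + X ^ 4 + X ^ 3) * h2

lemma hu9 : u 9 = X ^ 9 + X ^ 8 + X ^ 6 + X ^ 5 + X ^ 2 := by
  have h2 := two_eq_zero'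
  have e : u 9 = Fp * u 3 + u 8 := rfl
  have e6 : u 3 = X ^ 3 + X ^ 2 + X := rfl
  rw [e, e6, hu8, hFp]
  linear_combination (X ^ 8 + X ^ 7 + X ^ 4 + X ^ 3) * h2

lemma hu10 : u 10 = X ^ 10 + X ^ 8 + X ^ 2 := by
  have h2 := two_eq_zero'
  have e : u 10 = Fp * u 4 + u 9 := rfl
  have e6 : u 4 = X ^ 4 := rfl
  rw [e, e6, hu9, hFp]
  linear_combination (X ^ 9 + X ^ 6 + X ^ 5) * h2

lemma hu11 : u 11 = X ^ 11 + X ^ 10 + X ^ 9 + X ^ 8 + X ^ 6 + X ^ 5 + X ^ 3 := by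
  have h2 := two_eq_zero'
  have e : u 11 = Fp * u 5 + u 10 := rfl
  have e6 : u 5 = X ^ 5 + X ^ 4 + X := rfl
  rw [e, e6, hu10, hFp]
  linear_combination (X ^ 10 + X ^ 7 + X ^ 6 + X ^ 2) * h2

lemma hu12 : u 12 = X ^ 12 + X ^ 8 + X ^ 4 := by
  have h2 := two_eq_zero'
  have e : u 12 = Fp * u 6 + u 11 := rfl
  rw [e, hu6, hu11, hFp]
  linear_combination (X ^ 11 + X ^ 10 + X ^ 9 + X ^ 8 + X ^ 7 + X ^ 6 + X ^ 5 + X ^ 3) * h2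

lemma main_aux (C : ℕ → Polynomial (ZMod 2)) (hC : IsC C) :
    ∀ n : ℕ, u (2*n+2) + u (2*n+1) + X ^ (2*n+2) + X ^ (2*n+1)
      = (X ^ 2 + X) * (C n).comp (X ^ 2) := by
  have h2 := two_eq_zero'
  obtain ⟨hC0, hC1, hC2, hC3, hC4, hC5, hCr⟩ := hC
  intro n
  induction n using Nat.strong_induction_on with
  | _ n ih =>
    match n with
    | 0 =>
      have ea : u (2*0+2) = X ^ 2 := rfl
      have eb : u (2*0+1) = X := rfl
      rw [hC0, ea, eb]
      simp only [zero_comp]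
      linear_combination (X ^ 2 + X) * h2
    | 1 =>
      have ea : u (2*1+2) = X ^ 4 := rfl
      have eb : u (2*1+1) = X ^ 3 + X ^ 2 + X := rfl
      rw [hC1, ea, eb]
      simp only [one_comp]
      linear_combination (X ^ 4 + X ^ 3) * h2
    | 2 =>
      have ea : u (2*2+2) = u 6 := rfl
      have eb : u (2*2+1) = X ^ 5 + X ^ 4 + X := rfl
      rw [hC2, ea, eb, hu6]
      simp only [one_comp]
      linear_combination (X ^ 6 + X ^ 5 + X ^ 4) * h2
    | 3 =>
      have ea : u (2*3+2) = u 8 := rfl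
      have eb : u (2*3+1) = u 7 := rfl
      rw [hC3, ea, eb, hu8, hu7]
      simp only [X_comp]
      linear_combination (X ^ 8 + X ^ 7) * h2
    | 4 =>
      have ea : u (2*4+2) = u 10 := rfl
      have eb : u (2*4+1) = u 9 := rfl
      rw [hC4, ea, eb, hu10, hu9]
      simp only [pow_comp, X_comp]
      linear_combination (X ^ 10 + X ^ 9 + X ^ 8 + X ^ 2) * h2
    | 5 =>
      have ea : u (2*5+2) = u 12 := rfl
      have eb : u (2*5+1) = u 11 := rfl
      rw [hC5, ea, eb, hu12, hu11]
      simp only [add_comp, pow_comp, X_comp]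
      linear_combination (X ^ 12 + X ^ 11 + X ^ 8) * h2
    | (n+6) =>
      have e14 : u (2*n+14) = Fp * u (2*n+8) + u (2*n+13) := by
        rw [show 2*n+14 = (2*n+8)+6 by omega, show 2*n+13 = (2*n+8)+5 by omega]
        exact u_eq _
      have e8 : u (2*n+8) = Fp * u (2*n+2) + u (2*n+7) := by
        rw [show 2*n+8 = (2*n+2)+6 by omega, show 2*n+7 = (2*n+2)+5 by omega]
        exact u_eq _
      have e7 : u (2*n+7) = Fp * u (2*n+1) + u (2*n+6) := by
        rw [show 2*n+7 = (2*n+1)+6 by omega, show 2*n+6 = (2*n+1)+5 by omega]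
        exact u_eq _
      have e12 : u (2*n+12) = Fp * u (2*n+6) + u (2*n+11) := by
        rw [show 2*n+12 = (2*n+6)+6 by omega, show 2*n+11 = (2*n+6)+5 by omega]
        exact u_eq _
      rw [hFp] at e14 e8 e7 e12
      have ihn := ih n (by omega)
      have ih5 : u (2*n+12) + u (2*n+11) + X ^ (2*n+12) + X ^ (2*n+11)
          = (X ^ 2 + X) * (C (n+5)).comp (X ^ 2) := by
        have h' := ih (n+5) (by omega)
        rw [show 2*(n+5)+2 = 2*n+12 by omega, show 2*(n+5)+1 = 2*n+11 by omega] at h'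
        exact h'
      rw [show 2*(n+6)+2 = 2*n+14 by omega, show 2*(n+6)+1 = 2*n+13 by omega]
      rw [hCr n]
      simp only [add_comp, mul_comp, pow_comp, X_comp]
      linear_combination e14 + (X^6+X^5+X^2+X) * e8 + (X^6+X^5+X^2+X) * e7 + e12 + ih5
        + (X^12+X^10+X^4+X^2) * ihn
        + (u (2*n+13) + (-1 : Polynomial (ZMod 2)) * u (2*n+12) + X * u (2*n+6)
          + X ^ 2 * u (2*n+6) + X ^ 3 * u (2*n+2) + X ^ 3 * u (2*n+1)
          + (-1 : Polynomial (ZMod 2)) * X ^ 3 * X^(2*n) + (-1 : Polynomial (ZMod 2)) * X ^ 4 * X^(2*n)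
          + X ^ 5 * u (2*n+6) + (-1 : Polynomial (ZMod 2)) * X ^ 5 * X^(2*n) + X ^ 6 * u (2*n+6)
          + X ^ 6 * u (2*n+2) + X ^ 6 * u (2*n+1) + (-1 : Polynomial (ZMod 2)) * X ^ 6 * X^(2*n)
          + (2 : Polynomial (ZMod 2)) * X ^ 7 * u (2*n+2) + (2 : Polynomial (ZMod 2)) * X ^ 7 * u (2*n+1)
          + X ^ 8 * u (2*n+2) + X ^ 8 * u (2*n+1) + X ^ 11 * u (2*n+2) + X ^ 11 * u (2*n+1)
          + (-1 : Polynomial (ZMod 2)) * X ^ 11 * X^(2*n) + (-1 : Polynomial (ZMod 2)) * X ^ 12 * X^(2*n)) * h2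

theorem UplusI_image (U : Polynomial (ZMod 2) →ₗ[ZMod 2] Polynomial (ZMod 2)) (hU : IsU U)
    (C : ℕ → Polynomial (ZMod 2)) (hC : IsC C) (n : ℕ) :
    U ((X ^ 2 + X) * X ^ (2 * n)) + (X ^ 2 + X) * X ^ (2 * n)
      = (X ^ 2 + X) * (C n).comp (X ^ 2) := by
  have hUX : ∀ m, U (X ^ m) = u m := by
    intro m
    have h' := key U hU m 0
    simpa using h'
  have hsplit : ((X : Polynomial (ZMod 2)) ^ 2 + X) * X ^ (2*n)
      = X ^ (2*n+2) + X ^ (2*n+1) := by ring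
  rw [hsplit, map_add, hUX, hUX]
  calc u (2*n+2) + u (2*n+1) + (X ^ (2*n+2) + X ^ (2*n+1))
      = u (2*n+2) + u (2*n+1) + X ^ (2*n+2) + X ^ (2*n+1) := by ring
    _ = (X ^ 2 + X) * (C n).comp (X ^ 2) := main_aux C hC n

end
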